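/- Let G be a group whose commutator subgroup G' = [G,G] is finite. Then the quotient group G/Z(G) of G by its center is periodic, i.e., every element of G/Z(G) has finite order. -/

import Mathlib

theorem quotient_center_periodic_of_finite_commutator (G : Type*) [Group G]
    (hfin : Finite (commutator G)) :
    ∀ x : G ⧸ Subgroup.center G, IsOfFinOrder x := by
  intro x
  induction x using QuotientGroup.induction_on with
  | H g =>
    have hfinAut : Finite (MulAut (commutator G)) :=
      Finite.of_injective (fun f => (f : commutator G → commutator G))
        fun f g h => MulEquiv.ext (congrFun h)
    set φ : G →* MulAut (commutator G) := MulAut.conjNormal with hφ_def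
    set m := orderOf (φ g) with hm_def
    have hm : 0 < m := orderOf_pos _
    set e := Nat.card (commutator G) with he_def
    have he : 0 < e := Nat.card_pos
    rw [isOfFinOrder_iff_pow_eq_one]
    refine ⟨m * e, by positivity, ?_⟩
    have hmk : ((g : G ⧸ Subgroup.center G)) ^ (m * e)
        = ((g ^ (m * e) : G) : G ⧸ Subgroup.center G) := rfl
    rw [hmk, QuotientGroup.eq_one_iff, Subgroup.mem_center_iff]
    intro x
    have hφz : φ (g ^ m) = 1 := by
      rw [map_pow, hm_def, pow_orderOf_eq_one]
    have hfix : ∀ c ∈ commutator G, g ^ m * c * (g ^ m)⁻¹ = c := by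
      intro c hc
      have h1 : (φ (g ^ m)) ⟨c, hc⟩ = ⟨c, hc⟩ := by rw [hφz]; rfl
      have h2 := congrArg Subtype.val h1
      simpa only [hφ_def, MulAut.conjNormal_apply] using h2
    have hcmem : (g ^ m)⁻¹ * x⁻¹ * g ^ m * x ∈ commutator G := by
      open scoped commutatorElement in
      have h : (g ^ m)⁻¹ * x⁻¹ * g ^ m * x = ⁅(g ^ m)⁻¹, x⁻¹⁆ := by
        rw [commutatorElement_def]; group
      rw [h, commutator_def]
      exact Subgroup.commutator_mem_commutator (Subgroup.mem_top _) (Subgroup.mem_top _)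
    have hcomm : Commute (g ^ m) ((g ^ m)⁻¹ * x⁻¹ * g ^ m * x) := by
      have h := hfix _ hcmem
      unfold Commute SemiconjBy
      calc g ^ m * ((g ^ m)⁻¹ * x⁻¹ * g ^ m * x)
          = g ^ m * ((g ^ m)⁻¹ * x⁻¹ * g ^ m * x) * (g ^ m)⁻¹ * g ^ m := by group
        _ = ((g ^ m)⁻¹ * x⁻¹ * g ^ m * x) * g ^ m := by rw [h]
    have hce : ((g ^ m)⁻¹ * x⁻¹ * g ^ m * x) ^ e = 1 := by
      have h : (⟨_, hcmem⟩ : commutator G) ^ e = 1 := pow_card_eq_one'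
      have h2 := congrArg (Subtype.val) h
      simpa using h2
    have h1 : x⁻¹ * g ^ m * x = g ^ m * ((g ^ m)⁻¹ * x⁻¹ * g ^ m * x) := by group
    have hconj : x⁻¹ * (g ^ m) ^ e * x = (g ^ m) ^ e := by
      calc x⁻¹ * (g ^ m) ^ e * x = (x⁻¹ * g ^ m * x) ^ e := by
            rw [show x⁻¹ * g ^ m * x = x⁻¹ * g ^ m * x⁻¹⁻¹ by rw [inv_inv], conj_pow,
              inv_inv]
        _ = (g ^ m * ((g ^ m)⁻¹ * x⁻¹ * g ^ m * x)) ^ e := by rw [h1]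
        _ = (g ^ m) ^ e * ((g ^ m)⁻¹ * x⁻¹ * g ^ m * x) ^ e := hcomm.mul_pow e
        _ = (g ^ m) ^ e := by rw [hce, mul_one]
    rw [pow_mul]
    calc x * (g ^ m) ^ e = x * (x⁻¹ * (g ^ m) ^ e * x) := by rw [hconj]
      _ = (g ^ m) ^ e * x := by
          rw [← mul_assoc, ← mul_assoc, mul_inv_cancel, one_mul]
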